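/- More generally, if a maximal stabilizer group G on N qubits satisfies δ(G) ≥ k+1 (so |ψ_G⟩ is in k-body MITE), then any nonzero traceless Hamiltonian annihilating |ψ_G⟩ must contain at least one Pauli term whose support has size at least ⌈(k+1)/2⌉. -/

import Mathlib

open Matrix Complex BigOperators
open scoped Classical

noncomputable section

/-- Single-qubit Pauli matrices: I, X, Y, Z. -/
def pauli1 : Fin 4 → Matrix (Fin 2) (Fin 2) ℂ
  | 0 => 1
  | 1 => !![0, 1; 1, 0]
  | 2 => !![0, -Complex.I; Complex.I, 0]
  | 3 => !![1, 0; 0, -1]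

/-- Operators on an N-qubit system with sites indexed by `V`. -/
abbrev QOp (V : Type*) := Matrix (V → Fin 2) (V → Fin 2) ℂ

/-- The prefactor-1 Pauli string with single-site labels `p`. -/
def pauliOp {V : Type*} [Fintype V] (p : V → Fin 4) : QOp V :=
  Matrix.of fun x y => ∏ i, pauli1 (p i) (x i) (y i)

/-- Support of a Pauli string: sites where the tensor factor is not the identity. -/
def psupp {V : Type*} [Fintype V] (p : V → Fin 4) : Finset V :=
  Finset.univ.filter fun i => p i ≠ 0

/-- Allowed phases of Pauli group elements. -/
def isPhase (a : ℂ) : Prop := a = 1 ∨ a = -1 ∨ a = Complex.I ∨ a = -Complex.I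

/-- A maximal stabilizer group on qubits indexed by `V`: an abelian set of
prefactor-`±1` Pauli strings, closed under multiplication, containing `I`,
not containing `-I`, of cardinality `2 ^ |V|`. -/
structure MaxStabilizer (V : Type*) [Fintype V] [DecidableEq V] where
  carrier : Finset (QOp V)
  mem_pauli : ∀ g ∈ carrier, ∃ (c : ℂ) (p : V → Fin 4), (c = 1 ∨ c = -1) ∧ g = c • pauliOp p
  one_mem : (1 : QOp V) ∈ carrier
  mul_mem : ∀ g ∈ carrier, ∀ h ∈ carrier, g * h ∈ carrier
  mul_comm' : ∀ g ∈ carrier, ∀ h ∈ carrier, g * h = h * g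
  neg_one_not_mem : (-1 : QOp V) ∉ carrier
  card_eq : carrier.card = 2 ^ Fintype.card V

/-- `ψ` is the stabilizer state of `G`: a normalized common `+1`-eigenvector of all
elements of `G`. -/
def IsStabState {V : Type*} [Fintype V] [DecidableEq V] (G : MaxStabilizer V)
    (ψ : (V → Fin 2) → ℂ) : Prop :=
  (∀ g ∈ G.carrier, Matrix.mulVec g ψ = ψ) ∧ ∑ x, starRingEnd ℂ (ψ x) * ψ x = 1

/-- The projector `|ψ⟩⟨ψ|` onto a state `ψ`. -/
def projOf {V : Type*} (ψ : (V → Fin 2) → ℂ) : QOp V :=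
  Matrix.vecMulVec ψ fun x => starRingEnd ℂ (ψ x)

/-- Reduced density matrix (partial trace over the complement of `A`). -/
def reduced {V : Type*} [Fintype V] [DecidableEq V] (ρ : QOp V) (A : Finset V) :
    Matrix ({i // i ∈ A} → Fin 2) ({i // i ∈ A} → Fin 2) ℂ :=
  Matrix.of fun a b => ∑ c : {i // i ∉ A} → Fin 2,
    ρ (fun i => if h : i ∈ A then a ⟨i, h⟩ else c ⟨i, h⟩)
      (fun i => if h : i ∈ A then b ⟨i, h⟩ else c ⟨i, h⟩)

/-- `δ(G)`: minimum support size over nonidentity elements of `G`. -/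
def sdelta {V : Type*} [Fintype V] [DecidableEq V] (G : MaxStabilizer V) : ℕ :=
  sInf {k | ∃ (c : ℂ) (p : V → Fin 4), (c = 1 ∨ c = -1) ∧ c • pauliOp p ∈ G.carrier ∧
    c • pauliOp p ≠ 1 ∧ (psupp p).card = k}


section Aux
variable {V : Type*} [Fintype V] [DecidableEq V]

def mulP : Fin 4 → Fin 4 → Fin 4 := fun a b =>
  ![![0,1,2,3],![1,0,3,2],![2,3,0,1],![3,2,1,0]] a b
def phP : Fin 4 → Fin 4 → ℂ := fun a b =>
  ![![1,1,1,1],![1,1,Complex.I,-Complex.I],![1,-Complex.I,1,Complex.I],![1,Complex.I,-Complex.I,1]] a b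

lemma pauli1_mul (a b : Fin 4) : pauli1 a * pauli1 b = phP a b • pauli1 (mulP a b) := by
  fin_cases a <;> fin_cases b <;>
    ext i j <;> fin_cases i <;> fin_cases j <;>
    simp [pauli1, phP, mulP, Matrix.mul_apply, Fin.sum_univ_two, Matrix.one_apply,
      Matrix.vecHead, Matrix.vecTail]

lemma mulP_self (a : Fin 4) : mulP a a = 0 := by fin_cases a <;> rfl
lemma mulP_zero (a : Fin 4) : mulP a 0 = a := by fin_cases a <;> rfl
lemma mulP_eq_zero {a b : Fin 4} (h : mulP a b = 0) : a = b := by fin_cases a <;> fin_cases b <;> first | rfl | exact absurd h (by decide)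
lemma phP_self (a : Fin 4) : phP a a = 1 := by fin_cases a <;> simp [phP, Matrix.vecHead, Matrix.vecTail]
lemma pauli1_ct (a : Fin 4) : (pauli1 a)ᴴ = pauli1 a := by
  fin_cases a <;> ext i j <;> fin_cases i <;> fin_cases j <;>
    simp [pauli1, Matrix.conjTranspose_apply, Matrix.one_apply]
lemma pauli1_trace (a : Fin 4) : (pauli1 a).trace = if a = 0 then 2 else 0 := by
  fin_cases a <;> simp [pauli1, Matrix.trace, Fin.sum_univ_two, Matrix.one_apply]

lemma exchange (f : V → Fin 2 → ℂ) :
    ∑ x : V → Fin 2, ∏ i, f i (x i) = ∏ i, ∑ t, f i t := by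
  rw [Finset.prod_univ_sum, ← Fintype.piFinset_univ]

lemma kron_mul (m m' : V → Matrix (Fin 2) (Fin 2) ℂ) :
    (Matrix.of fun x y : V → Fin 2 => ∏ i, m i (x i) (y i)) *
      (Matrix.of fun x y => ∏ i, m' i (x i) (y i)) =
    Matrix.of fun x y => ∏ i, (m i * m' i) (x i) (y i) := by
  ext x y
  simp only [Matrix.mul_apply, Matrix.of_apply]
  rw [show (∑ z : V → Fin 2, (∏ i, m i (x i) (z i)) * ∏ i, m' i (z i) (y i))
      = ∑ z : V → Fin 2, ∏ i, (m i (x i) (z i) * m' i (z i) (y i)) by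
    refine Finset.sum_congr rfl fun z _ => ?_; rw [Finset.prod_mul_distrib]]
  exact exchange fun i t => m i (x i) t * m' i t (y i)

lemma kron_trace (m : V → Matrix (Fin 2) (Fin 2) ℂ) :
    (Matrix.of fun x y : V → Fin 2 => ∏ i, m i (x i) (y i)).trace = ∏ i, (m i).trace := by
  simp only [Matrix.trace, Matrix.diag, Matrix.of_apply]
  exact exchange fun i t => m i t t

lemma pauliOp_mul (P Q : V → Fin 4) :
    pauliOp P * pauliOp Q = (∏ i, phP (P i) (Q i)) • pauliOp (fun i => mulP (P i) (Q i)) := by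
  rw [pauliOp, pauliOp, kron_mul]
  ext x y
  simp only [Matrix.of_apply, Matrix.smul_apply, pauliOp, smul_eq_mul]
  rw [← Finset.prod_mul_distrib]
  refine Finset.prod_congr rfl fun i _ => ?_
  rw [pauli1_mul]; simp

lemma pauliOp_zero : pauliOp (fun _ : V => (0 : Fin 4)) = 1 := by
  ext x y
  by_cases h : x = y
  · subst h; simp [pauliOp, pauli1, Matrix.one_apply]
  · obtain ⟨i, hi⟩ := Function.ne_iff.mp h
    rw [pauliOp, Matrix.of_apply, Finset.prod_eq_zero (Finset.mem_univ i), Matrix.one_apply_ne h]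
    simp [pauli1, Matrix.one_apply, hi]

lemma pauliOp_self (P : V → Fin 4) : pauliOp P * pauliOp P = 1 := by
  rw [pauliOp_mul]
  simp [phP_self, mulP_self, pauliOp_zero]

lemma pauliOp_trace (P : V → Fin 4) :
    (pauliOp P).trace = if P = (fun _ => 0) then (2 : ℂ) ^ Fintype.card V else 0 := by
  rw [pauliOp, kron_trace]
  by_cases h : P = fun _ => 0
  · simp [h, pauli1_trace, Finset.prod_const]
  · obtain ⟨i, hi⟩ := Function.ne_iff.mp h
    rw [Finset.prod_eq_zero (Finset.mem_univ i)]
    · simp [h]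
    · simp [pauli1_trace, hi]

lemma pauliOp_ct (P : V → Fin 4) : (pauliOp P)ᴴ = pauliOp P := by
  ext x y
  rw [Matrix.conjTranspose_apply, pauliOp, Matrix.of_apply, Matrix.of_apply, RCLike.star_def,
    map_prod]
  exact Finset.prod_congr rfl fun i _ => by
    rw [show (starRingEnd ℂ) (pauli1 (P i) (y i) (x i)) = (pauli1 (P i))ᴴ (x i) (y i) by
      rw [Matrix.conjTranspose_apply, RCLike.star_def], pauli1_ct]


variable (G : MaxStabilizer V)


lemma sum_mulVec' {α : Type*} (s : Finset α) (f : α → QOp V) (v : (V → Fin 2) → ℂ) :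
    (∑ a ∈ s, f a).mulVec v = ∑ a ∈ s, (f a).mulVec v := by
  induction s using Finset.cons_induction with
  | empty => simp [Matrix.zero_mulVec]
  | cons a s ha ih => rw [Finset.sum_cons, Finset.sum_cons, Matrix.add_mulVec, ih]

lemma two_pow_ne : ((2 : ℂ) ^ Fintype.card V) ≠ 0 := pow_ne_zero _ two_ne_zero

lemma g_herm {g : QOp V} (hg : g ∈ G.carrier) : gᴴ = g := by
  obtain ⟨c, p, hc, rfl⟩ := G.mem_pauli g hg
  rw [Matrix.conjTranspose_smul, pauliOp_ct]
  rcases hc with rfl | rfl <;> simp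

lemma g_sq {g : QOp V} (hg : g ∈ G.carrier) : g * g = 1 := by
  obtain ⟨c, p, hc, rfl⟩ := G.mem_pauli g hg
  rw [Matrix.smul_mul, Matrix.mul_smul, pauliOp_self, smul_smul]
  rcases hc with rfl | rfl <;> norm_num

lemma trace_g {g : QOp V} (hg : g ∈ G.carrier) (hne : g ≠ 1) : g.trace = 0 := by
  obtain ⟨c, p, hc, rfl⟩ := G.mem_pauli g hg
  by_cases hp : p = fun _ => 0
  · subst hp
    rw [pauliOp_zero] at hg hne ⊢
    rcases hc with rfl | rfl
    · exact absurd (one_smul _ _) hne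
    · rw [neg_smul, one_smul] at hg
      exact absurd hg G.neg_one_not_mem
  · rw [Matrix.trace_smul, pauliOp_trace, if_neg hp, smul_zero]

def PiG : QOp V := ((2 : ℂ) ^ Fintype.card V)⁻¹ • ∑ g ∈ G.carrier, g

lemma PiG_trace : (PiG G).trace = 1 := by
  rw [PiG, Matrix.trace_smul, Matrix.trace_sum]
  rw [Finset.sum_eq_single_of_mem 1 G.one_mem (fun g hg hne => trace_g G hg hne)]
  rw [Matrix.trace_one]
  simp only [smul_eq_mul]
  rw [Fintype.card_fun, Fintype.card_fin]
  push_cast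
  rw [inv_mul_cancel₀ two_pow_ne]

lemma PiG_herm : (PiG G)ᴴ = PiG G := by
  rw [PiG, Matrix.conjTranspose_smul, Matrix.conjTranspose_sum]
  congr 1
  · simp
  · exact Finset.sum_congr rfl fun g hg => g_herm G hg

lemma PiG_mulVec {ψ : (V → Fin 2) → ℂ} (hψ : IsStabState G ψ) :
    (PiG G).mulVec ψ = ψ := by
  rw [PiG, Matrix.smul_mulVec, sum_mulVec']
  rw [Finset.sum_congr rfl fun g hg => hψ.1 g hg, Finset.sum_const, G.card_eq]
  rw [← Nat.cast_smul_eq_nsmul ℂ, smul_smul]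
  push_cast
  rw [inv_mul_cancel₀ (two_pow_ne), one_smul]

lemma PiG_idem : PiG G * PiG G = PiG G := by
  rw [PiG, Matrix.smul_mul, Matrix.mul_smul, Finset.sum_mul]
  have key : ∀ g ∈ G.carrier, g * (∑ h ∈ G.carrier, h) = ∑ h ∈ G.carrier, h := by
    intro g hg
    rw [Finset.mul_sum]
    refine Finset.sum_nbij' (fun h => g * h) (fun h => g * h) ?_ ?_ ?_ ?_ ?_
    · exact fun h hh => G.mul_mem g hg h hh
    · exact fun h hh => G.mul_mem g hg h hh
    · intro h hh; show g * (g * h) = h; rw [← mul_assoc, g_sq G hg, one_mul]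
    · intro h hh; show g * (g * h) = h; rw [← mul_assoc, g_sq G hg, one_mul]
    · intro h hh; rfl
  rw [Finset.sum_congr rfl key, Finset.sum_const, G.card_eq]
  rw [← Nat.cast_smul_eq_nsmul ℂ, smul_smul, smul_smul]
  push_cast
  rw [mul_comm (((2:ℂ)^Fintype.card V)⁻¹), mul_assoc, inv_mul_cancel₀ (two_pow_ne), mul_one]

lemma herm_idem_trace_zero {Q : QOp V} (hh : Qᴴ = Q) (hi : Q * Q = Q) (ht : Q.trace = 0) :
    Q = 0 := by
  have h2 : (Qᴴ * Q).trace = 0 := by rw [hh, hi, ht]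
  have h3 : (Qᴴ * Q).trace = ((∑ x, ∑ y, Complex.normSq (Q y x) : ℝ) : ℂ) := by
    rw [Matrix.trace]
    push_cast
    refine Finset.sum_congr rfl fun x _ => ?_
    rw [Matrix.diag_apply, Matrix.mul_apply]
    refine Finset.sum_congr rfl fun y _ => ?_
    rw [Matrix.conjTranspose_apply, RCLike.star_def, Complex.normSq_eq_conj_mul_self]
  rw [h2] at h3
  have h4 : (∑ x : V → Fin 2, ∑ y : V → Fin 2, Complex.normSq (Q y x)) = 0 := by
    exact_mod_cast h3.symm
  ext y x
  have h5 := (Finset.sum_eq_zero_iff_of_nonneg (fun x _ =>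
    Finset.sum_nonneg fun y _ => Complex.normSq_nonneg _)).mp h4 x (Finset.mem_univ x)
  have h6 := (Finset.sum_eq_zero_iff_of_nonneg (fun y _ =>
    Complex.normSq_nonneg _)).mp h5 y (Finset.mem_univ y)
  simpa using Complex.normSq_eq_zero.mp h6

lemma mul_vecMulVec (A : QOp V) (v w : (V → Fin 2) → ℂ) :
    A * Matrix.vecMulVec v w = Matrix.vecMulVec (A.mulVec v) w := by
  ext x y
  simp only [Matrix.mul_apply, Matrix.vecMulVec_apply, Matrix.mulVec, dotProduct,
    Finset.sum_mul]
  exact Finset.sum_congr rfl fun z _ => by ring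

lemma vecMulVec_mul (A : QOp V) (v w : (V → Fin 2) → ℂ) :
    Matrix.vecMulVec v w * A = Matrix.vecMulVec v (Matrix.vecMul w A) := by
  ext x y
  simp only [Matrix.mul_apply, Matrix.vecMulVec_apply, Matrix.vecMul, dotProduct,
    Finset.mul_sum]
  exact Finset.sum_congr rfl fun z _ => by ring

lemma proj_herm (ψ : (V → Fin 2) → ℂ) : (projOf ψ)ᴴ = projOf ψ := by
  ext x y
  simp [projOf, Matrix.conjTranspose_apply, Matrix.vecMulVec_apply, mul_comm]

lemma proj_trace {ψ : (V → Fin 2) → ℂ} (hn : ∑ x, starRingEnd ℂ (ψ x) * ψ x = 1) :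
    (projOf ψ).trace = 1 := by
  rw [Matrix.trace]
  rw [← hn]
  exact Finset.sum_congr rfl fun x _ => by
    simp [projOf, Matrix.vecMulVec_apply, mul_comm]

lemma proj_idem {ψ : (V → Fin 2) → ℂ} (hn : ∑ x, starRingEnd ℂ (ψ x) * ψ x = 1) :
    projOf ψ * projOf ψ = projOf ψ := by
  rw [projOf, _root_.mul_vecMulVec]
  congr 1
  ext x
  simp only [Matrix.mulVec, dotProduct, Matrix.vecMulVec_apply]
  rw [show (∑ z, ψ x * starRingEnd ℂ (ψ z) * ψ z) = ψ x * ∑ z, starRingEnd ℂ (ψ z) * ψ z by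
    rw [Finset.mul_sum]; exact Finset.sum_congr rfl fun z _ => by ring]
  rw [hn, mul_one]

lemma PiG_eq_proj {ψ : (V → Fin 2) → ℂ} (hψ : IsStabState G ψ) :
    PiG G = projOf ψ := by
  set Q := PiG G - projOf ψ with hQ
  have hPp : PiG G * projOf ψ = projOf ψ := by
    rw [projOf, _root_.mul_vecMulVec, PiG_mulVec G hψ]
  have hvm : Matrix.vecMul (fun x => starRingEnd ℂ (ψ x)) (PiG G)
      = fun x => starRingEnd ℂ (ψ x) := by
    ext j
    have := congrFun (PiG_mulVec G hψ) j
    rw [Matrix.mulVec, dotProduct] at this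
    rw [Matrix.vecMul, dotProduct]
    calc ∑ i, starRingEnd ℂ (ψ i) * PiG G i j
        = starRingEnd ℂ (∑ i, ψ i * starRingEnd ℂ (PiG G i j)) := by
          rw [map_sum]; exact Finset.sum_congr rfl fun i _ => by simp [mul_comm]
      _ = starRingEnd ℂ (∑ i, PiG G j i * ψ i) := by
          congr 1
          exact Finset.sum_congr rfl fun i _ => by
            rw [show starRingEnd ℂ (PiG G i j) = (PiG G)ᴴ j i from rfl, PiG_herm G, mul_comm]
      _ = starRingEnd ℂ (ψ j) := by rw [this]
  have hpP : projOf ψ * PiG G = projOf ψ := by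
    rw [projOf, _root_.vecMulVec_mul, hvm]
  have hi : Q * Q = Q := by
    rw [hQ, Matrix.sub_mul, Matrix.mul_sub, Matrix.mul_sub, PiG_idem, hPp, hpP,
      proj_idem hψ.2]
    abel
  have hh : Qᴴ = Q := by rw [hQ, Matrix.conjTranspose_sub, PiG_herm, proj_herm]
  have ht : Q.trace = 0 := by rw [hQ, Matrix.trace_sub, PiG_trace, proj_trace hψ.2, sub_self]
  have := herm_idem_trace_zero hh hi ht
  rw [hQ, sub_eq_zero] at this
  exact this

lemma inner_trace (M : QOp V) (ψ : (V → Fin 2) → ℂ) :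
    ∑ x, starRingEnd ℂ (ψ x) * (M.mulVec ψ) x = (M * projOf ψ).trace := by
  rw [Matrix.trace]
  refine Finset.sum_congr rfl fun x _ => ?_
  rw [Matrix.diag_apply, Matrix.mul_apply, Matrix.mulVec, dotProduct, Finset.mul_sum]
  refine Finset.sum_congr rfl fun z _ => ?_
  rw [projOf, Matrix.vecMulVec_apply]
  ring

lemma W_eq_T (ψ : (V → Fin 2) → ℂ) (P Q : V → Fin 4) :
    ∑ x, starRingEnd ℂ (((pauliOp P).mulVec ψ) x) * ((pauliOp Q).mulVec ψ) x
      = ∑ x, starRingEnd ℂ (ψ x) * (((pauliOp P * pauliOp Q)).mulVec ψ) x := by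
  have hstar : ∀ x z, starRingEnd ℂ (pauliOp P x z) = pauliOp P z x := by
    intro x z
    rw [show starRingEnd ℂ (pauliOp P x z) = (pauliOp P)ᴴ z x by
      rw [Matrix.conjTranspose_apply, RCLike.star_def], pauliOp_ct]
  calc ∑ x, starRingEnd ℂ (((pauliOp P).mulVec ψ) x) * ((pauliOp Q).mulVec ψ) x
      = ∑ x, ∑ z, starRingEnd ℂ (ψ z) * (pauliOp P z x * ((pauliOp Q).mulVec ψ) x) := by
        refine Finset.sum_congr rfl fun x _ => ?_
        rw [Matrix.mulVec, dotProduct, map_sum, Finset.sum_mul]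
        refine Finset.sum_congr rfl fun z _ => ?_
        rw [_root_.map_mul, hstar]
        ring
    _ = ∑ z, starRingEnd ℂ (ψ z) * ∑ x, pauliOp P z x * ((pauliOp Q).mulVec ψ) x := by
        rw [Finset.sum_comm]
        exact Finset.sum_congr rfl fun z _ => by rw [Finset.mul_sum]
    _ = ∑ z, starRingEnd ℂ (ψ z) * (((pauliOp P * pauliOp Q)).mulVec ψ) z := by
        refine Finset.sum_congr rfl fun z _ => ?_
        rw [← Matrix.mulVec_mulVec]
        rfl

end Aux

/-- if `δ(G) ≥ k+1`, any nonzero traceless Hamiltonian annihilating the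
stabilizer state contains a Pauli term with support of size at least `⌈(k+1)/2⌉`. -/
theorem stmt8 (N k : ℕ) (G : MaxStabilizer (Fin N)) (ψ : (Fin N → Fin 2) → ℂ)
    (hψ : IsStabState G ψ) (hδ : k + 1 ≤ sdelta G) (h : (Fin N → Fin 4) → ℂ)
    (htr : h (fun _ => 0) = 0)
    (hne : ∃ P, h P ≠ 0)
    (hann : (∑ P : Fin N → Fin 4, h P • pauliOp P).mulVec ψ = 0) :
    ∃ P, h P ≠ 0 ∧ (k + 2) / 2 ≤ (psupp P).card := by
  by_contra hcon
  push_neg at hcon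
  -- expectation of small nonidentity Pauli strings vanishes
  have expect_zero : ∀ R : Fin N → Fin 4, (psupp R).card ≤ k → R ≠ (fun _ => 0) →
      (pauliOp R * projOf ψ).trace = 0 := by
    intro R hcard hR
    rw [← PiG_eq_proj G hψ, PiG, Matrix.mul_smul, Matrix.trace_smul, Finset.mul_sum,
      Matrix.trace_sum]
    rw [Finset.sum_eq_zero, smul_zero]
    intro g hg
    obtain ⟨c, p, hc, rfl⟩ := G.mem_pauli g hg
    rw [Matrix.mul_smul, Matrix.trace_smul, pauliOp_mul, Matrix.trace_smul, pauliOp_trace]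
    by_cases hz : (fun i => mulP (R i) (p i)) = fun _ => (0 : Fin 4)
    · exfalso
      have hRp : R = p := funext fun i => mulP_eq_zero (congrFun hz i)
      subst hRp
      have hne1 : c • pauliOp R ≠ 1 := by
        intro he
        have h2 := congrArg Matrix.trace he
        rw [Matrix.trace_smul, pauliOp_trace, if_neg hR, Matrix.trace_one, smul_zero] at h2
        rw [Fintype.card_fun, Fintype.card_fin, Fintype.card_fin] at h2
        have h3 : ((2:ℂ)) ^ N ≠ 0 := pow_ne_zero _ (by norm_num)
        push_cast at h2
        exact h3 h2.symm
      have hmem : (psupp R).card ∈ {m | ∃ (c : ℂ) (p : Fin N → Fin 4), (c = 1 ∨ c = -1) ∧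
          c • pauliOp p ∈ G.carrier ∧ c • pauliOp p ≠ 1 ∧ (psupp p).card = m} :=
        ⟨c, R, hc, hg, hne1, rfl⟩
      have hge : k + 1 ≤ (psupp R).card := le_trans hδ (Nat.sInf_le hmem)
      omega
    · rw [if_neg hz, smul_zero, smul_zero]
  -- off-diagonal expectation values vanish
  have Tval : ∀ P Q : Fin N → Fin 4, h P ≠ 0 → h Q ≠ 0 → P ≠ Q →
      ∑ x, starRingEnd ℂ (ψ x) * (((pauliOp P * pauliOp Q)).mulVec ψ) x = 0 := by
    intro P Q hP hQ hPQ
    rw [pauliOp_mul]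
    set R := fun i => mulP (P i) (Q i) with hRdef
    have hR0 : R ≠ fun _ => 0 := by
      intro hr
      exact hPQ (funext fun i => mulP_eq_zero (congrFun hr i))
    have hsub : psupp R ⊆ psupp P ∪ psupp Q := by
      intro i hi
      simp only [psupp, Finset.mem_filter, Finset.mem_union, Finset.mem_univ, true_and] at hi ⊢
      by_contra hcc
      push_neg at hcc
      rw [hRdef] at hi
      simp only [hcc.1, hcc.2] at hi
      exact hi rfl
    have hcard : (psupp R).card ≤ k := by
      have h1 := hcon P hP
      have h2 := hcon Q hQ
      have h3 : (psupp R).card ≤ (psupp P).card + (psupp Q).card :=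
        le_trans (Finset.card_le_card hsub) (Finset.card_union_le _ _)
      have h4 : (k + 2) / 2 * 2 ≤ k + 2 := Nat.div_mul_le_self _ _
      omega
    have hz := expect_zero R hcard hR0
    rw [← inner_trace] at hz
    rw [Matrix.smul_mulVec]
    simp only [Pi.smul_apply, smul_eq_mul]
    rw [show (∑ x, starRingEnd ℂ (ψ x) * ((∏ i, phP (P i) (Q i)) * ((pauliOp R).mulVec ψ) x))
        = (∏ i, phP (P i) (Q i)) * ∑ x, starRingEnd ℂ (ψ x) * ((pauliOp R).mulVec ψ) x by
      rw [Finset.mul_sum]; exact Finset.sum_congr rfl fun x _ => by ring]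
    rw [hz, mul_zero]
  -- diagonal expectation is 1
  have Tdiag : ∀ P : Fin N → Fin 4,
      ∑ x, starRingEnd ℂ (ψ x) * (((pauliOp P * pauliOp P)).mulVec ψ) x = 1 := by
    intro P
    rw [pauliOp_self, Matrix.one_mulVec]
    exact hψ.2
  -- expand ⟨Hψ, Hψ⟩ = 0
  set u : (Fin N → Fin 4) → (Fin N → Fin 2) → ℂ := fun P => (pauliOp P).mulVec ψ with hu
  have hv : ∀ x, ((∑ P : Fin N → Fin 4, h P • pauliOp P).mulVec ψ) x
      = ∑ P : Fin N → Fin 4, h P * u P x := by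
    intro x
    rw [sum_mulVec', Finset.sum_apply]
    exact Finset.sum_congr rfl fun P _ => by
      rw [Matrix.smul_mulVec, Pi.smul_apply, smul_eq_mul, hu]
  have expand : (0 : ℂ) = ∑ P : Fin N → Fin 4, ∑ Q : Fin N → Fin 4,
      (starRingEnd ℂ (h P) * h Q) * ∑ x, starRingEnd ℂ (u P x) * u Q x := by
    have h0 : ∑ x, starRingEnd ℂ (((∑ P : Fin N → Fin 4, h P • pauliOp P).mulVec ψ) x)
        * ((∑ P : Fin N → Fin 4, h P • pauliOp P).mulVec ψ) x = 0 := by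
      rw [hann]; simp
    rw [← h0]
    calc ∑ x, starRingEnd ℂ (((∑ P : Fin N → Fin 4, h P • pauliOp P).mulVec ψ) x)
          * ((∑ P : Fin N → Fin 4, h P • pauliOp P).mulVec ψ) x
        = ∑ x, ∑ P : Fin N → Fin 4, ∑ Q : Fin N → Fin 4,
            (starRingEnd ℂ (h P) * h Q) * (starRingEnd ℂ (u P x) * u Q x) := by
          refine Finset.sum_congr rfl fun x _ => ?_
          rw [hv x, map_sum, Finset.sum_mul_sum]
          refine Finset.sum_congr rfl fun P _ => Finset.sum_congr rfl fun Q _ => ?_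
          rw [_root_.map_mul]; ring
      _ = ∑ P : Fin N → Fin 4, ∑ Q : Fin N → Fin 4, ∑ x,
            (starRingEnd ℂ (h P) * h Q) * (starRingEnd ℂ (u P x) * u Q x) := by
          rw [Finset.sum_comm]
          exact Finset.sum_congr rfl fun P _ => Finset.sum_comm
      _ = ∑ P : Fin N → Fin 4, ∑ Q : Fin N → Fin 4,
            (starRingEnd ℂ (h P) * h Q) * ∑ x, starRingEnd ℂ (u P x) * u Q x := by
          refine Finset.sum_congr rfl fun P _ => Finset.sum_congr rfl fun Q _ => ?_
          rw [Finset.mul_sum]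
  -- evaluate each term
  have term : ∀ P Q : Fin N → Fin 4,
      (starRingEnd ℂ (h P) * h Q) * (∑ x, starRingEnd ℂ (u P x) * u Q x)
        = if P = Q then starRingEnd ℂ (h P) * h P else 0 := by
    intro P Q
    have hWT := W_eq_T ψ P Q
    by_cases hPQ : P = Q
    · subst hPQ
      rw [if_pos rfl, hu]
      simp only []
      rw [hWT, Tdiag P, mul_one]
    · rw [if_neg hPQ, hu]
      simp only []
      by_cases hP : h P = 0
      · rw [hP]; simp
      by_cases hQ : h Q = 0
      · rw [hQ]; simp
      rw [hWT, Tval P Q hP hQ hPQ, mul_zero]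
  rw [Finset.sum_congr rfl fun P _ => Finset.sum_congr rfl fun Q _ => term P Q] at expand
  simp only [Finset.sum_ite_eq, Finset.mem_univ, if_true] at expand
  -- conclude all coefficients vanish
  have hcast : ∑ P : Fin N → Fin 4, starRingEnd ℂ (h P) * h P
      = ((∑ P : Fin N → Fin 4, Complex.normSq (h P) : ℝ) : ℂ) := by
    push_cast
    exact Finset.sum_congr rfl fun P _ => Complex.normSq_eq_conj_mul_self.symm
  rw [hcast] at expand
  have hzero : (∑ P : Fin N → Fin 4, Complex.normSq (h P)) = 0 := by exact_mod_cast expand.symm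
  obtain ⟨P0, hP0⟩ := hne
  have hP0z := (Finset.sum_eq_zero_iff_of_nonneg
    (fun P _ => Complex.normSq_nonneg _)).mp hzero P0 (Finset.mem_univ P0)
  exact hP0 (Complex.normSq_eq_zero.mp hP0z)
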